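/- With g(x) = (1/(m/2+1))·[2x+1 − 2√(x(x+1))·cos(2√π(√(x+1) − √x))] for m a positive even integer, g is monotonically increasing on [1,∞), and consequently g(x) < π/(m/2+1) for all x ∈ [1,∞). -/

import Mathlib

open Real

noncomputable def spiralPhi (u : ℝ) : ℝ :=
  Real.sin (Real.sqrt Real.pi * u) ^ 2 / u ^ 2 + u ^ 2 * Real.cos (Real.sqrt Real.pi * u) ^ 2

lemma spiral_t_bounds {u : ℝ} (hu : 0 < u) (hu' : u ≤ Real.sqrt 2 - 1) :
    0 < Real.sqrt Real.pi * u ∧ Real.sqrt Real.pi * u ≤ 3 / 4 := by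
  have hp : 0 < Real.sqrt Real.pi := Real.sqrt_pos.mpr Real.pi_pos
  have hp' : Real.sqrt Real.pi < 1.775 := by
    rw [Real.sqrt_lt' (by norm_num)]
    nlinarith [Real.pi_lt_d2]
  have h2 : Real.sqrt 2 < 1.415 := by
    rw [Real.sqrt_lt' (by norm_num)]; norm_num
  constructor
  · positivity
  · nlinarith

lemma spiral_sin_key {t : ℝ} (ht : 0 < t) (ht' : t ≤ 3 / 4) :
    4 / 25 * t ^ 4 ≤ Real.sin t * (Real.sin t - t * Real.cos t) := by
  have ht2 : t ^ 2 ≤ 9 / 16 := by nlinarith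
  have ht3 : t ^ 3 ≤ 9 / 16 * t := by nlinarith
  have ht5 : t ^ 5 ≤ 9 / 16 * t ^ 3 := by nlinarith [pow_pos ht 3]
  have hs1 : t - t ^ 3 / 4 < Real.sin t := by have := Real.sin_gt_sub_cube ht; nlinarith [pow_pos ht 3]
  have hs : 4 / 5 * t ≤ Real.sin t := by linarith
  have h2 : t / 2 - (t / 2) ^ 3 / 4 < Real.sin (t / 2) :=
    by have := Real.sin_gt_sub_cube (x := t / 2) (by linarith); nlinarith [pow_pos (by linarith : (0:ℝ) < t / 2) 3]
  have h2' : 0 ≤ t / 2 - (t / 2) ^ 3 / 4 := by nlinarith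
  have hcos : Real.cos t = 1 - 2 * Real.sin (t / 2) ^ 2 := by
    have h := Real.cos_two_mul (t / 2)
    have h' := Real.sin_sq_add_cos_sq (t / 2)
    have : (2 : ℝ) * (t / 2) = t := by ring
    rw [this] at h
    linarith
  have hsq : (t / 2 - (t / 2) ^ 3 / 4) ^ 2 ≤ Real.sin (t / 2) ^ 2 := by nlinarith
  have hexp : (t / 2 - (t / 2) ^ 3 / 4) ^ 2 = t ^ 2 / 4 - t ^ 4 / 32 + t ^ 6 / 1024 := by
    ring
  have ht6 : 0 ≤ t ^ 6 := by positivity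
  have hcub : Real.cos t ≤ 1 - t ^ 2 / 2 + t ^ 4 / 16 := by
    rw [hexp] at hsq
    linarith
  have h6 : t * Real.cos t ≤ t * (1 - t ^ 2 / 2 + t ^ 4 / 16) :=
    mul_le_mul_of_nonneg_left hcub ht.le
  have hsc : t ^ 3 / 5 ≤ Real.sin t - t * Real.cos t := by nlinarith [ht5]
  nlinarith [mul_le_mul hs hsc (by positivity) (by linarith : (0:ℝ) ≤ Real.sin t)]

lemma spiral_F_neg {t u s c : ℝ} (ht : 0 < t) (hu : 0 < u)
    (hkey : 4 / 25 * t ^ 4 ≤ s * (s - t * c)) (hcpos : 0 < c) (hc1 : c ≤ 1)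
    (hspos : 0 < s) (h9 : 9 * u ^ 4 ≤ t ^ 4) :
    s * c * t - s ^ 2 + u ^ 4 * c ^ 2 - t * u ^ 4 * c * s < 0 := by
  have hcc : c * c ≤ 1 := by nlinarith
  have hts : 0 ≤ c * (t * s) := by positivity
  have h3 : u ^ 4 * (c * (c - t * s)) ≤ u ^ 4 := by nlinarith [pow_pos hu 4]
  have ht4 : 0 < t ^ 4 := by positivity
  nlinarith

lemma spiral_main_ineq {t u s c : ℝ} (ht : 0 < t) (ht34 : t ≤ 3 / 4) (hu : 0 < u)
    (hpy : s ^ 2 = 1 - c ^ 2) (hclb : 1 - t ^ 2 / 2 ≤ c) (hc1 : c ≤ 1) (hcpos : 0 < c)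
    (h9 : 9 * u ^ 4 ≤ t ^ 4) : s ^ 2 + u ^ 4 * c ^ 2 < t ^ 2 := by
  have hcsq : (1 - t ^ 2 / 2) ^ 2 ≤ c ^ 2 := by
    nlinarith [mul_nonneg (by linarith : (0:ℝ) ≤ c - (1 - t ^ 2 / 2))
      (by nlinarith : (0:ℝ) ≤ c + (1 - t ^ 2 / 2))]
  have hu4c : u ^ 4 * c ^ 2 ≤ u ^ 4 := by nlinarith [pow_pos hu 4]
  have hu4 : u ^ 4 ≤ t ^ 4 / 9 := by linarith
  have ht4pos : 0 < t ^ 4 := by positivity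
  have hexp : (1 - t ^ 2 / 2) ^ 2 = 1 - t ^ 2 + t ^ 4 / 4 := by ring
  rw [hexp] at hcsq
  linarith

lemma spiral_hasDerivAt {u : ℝ} (hu : u ≠ 0) :
    HasDerivAt spiralPhi
      ((2 * Real.sin (Real.sqrt Real.pi * u) * (Real.cos (Real.sqrt Real.pi * u) * Real.sqrt Real.pi) * u ^ 2
          - Real.sin (Real.sqrt Real.pi * u) ^ 2 * (2 * u)) / (u ^ 2) ^ 2
        + (2 * u * Real.cos (Real.sqrt Real.pi * u) ^ 2
          + u ^ 2 * (2 * Real.cos (Real.sqrt Real.pi * u) * (-Real.sin (Real.sqrt Real.pi * u) * Real.sqrt Real.pi)))) u := by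
  set p := Real.sqrt Real.pi with hp
  have h1 : HasDerivAt (fun v : ℝ => p * v) p u := by
    simpa using (hasDerivAt_id u).const_mul p
  have hsin : HasDerivAt (fun v => Real.sin (p * v)) (Real.cos (p * u) * p) u :=
    (Real.hasDerivAt_sin (p * u)).comp u h1
  have hcos : HasDerivAt (fun v => Real.cos (p * v)) (-Real.sin (p * u) * p) u :=
    (Real.hasDerivAt_cos (p * u)).comp u h1
  have hs2 : HasDerivAt (fun v => Real.sin (p * v) ^ 2)
      (2 * Real.sin (p * u) * (Real.cos (p * u) * p)) u := by
    have := hsin.fun_pow 2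
    simpa [mul_comm, mul_assoc, mul_left_comm] using this
  have hc2 : HasDerivAt (fun v => Real.cos (p * v) ^ 2)
      (2 * Real.cos (p * u) * (-Real.sin (p * u) * p)) u := by
    have := hcos.fun_pow 2
    simpa [mul_comm, mul_assoc, mul_left_comm] using this
  have hu2 : HasDerivAt (fun v : ℝ => v ^ 2) (2 * u) u := by
    simpa using hasDerivAt_pow 2 u
  have hne : u ^ 2 ≠ 0 := pow_ne_zero 2 hu
  exact (hs2.div hu2 hne).add (hu2.mul hc2)

lemma spiral_deriv_neg {u : ℝ} (hu : 0 < u) (hu' : u ≤ Real.sqrt 2 - 1) :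
    deriv spiralPhi u < 0 := by
  have hD := (spiral_hasDerivAt hu.ne').deriv
  rw [hD]
  obtain ⟨htpos, ht34⟩ := spiral_t_bounds hu hu'
  have hkey := spiral_sin_key htpos ht34
  have hp2 : Real.sqrt Real.pi ^ 2 = Real.pi := Real.sq_sqrt Real.pi_pos.le
  have hppos : 0 < Real.sqrt Real.pi := Real.sqrt_pos.mpr Real.pi_pos
  have hcpos : 0 < Real.cos (Real.sqrt Real.pi * u) := Real.cos_pos_of_mem_Ioo
    ⟨by nlinarith [Real.pi_gt_three], by nlinarith [Real.pi_gt_three]⟩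
  have hc1 : Real.cos (Real.sqrt Real.pi * u) ≤ 1 := Real.cos_le_one _
  have hspos : 0 < Real.sin (Real.sqrt Real.pi * u) :=
    Real.sin_pos_of_pos_of_lt_pi htpos (by nlinarith [Real.pi_gt_three])
  have h9 : 9 * u ^ 4 ≤ (Real.sqrt Real.pi * u) ^ 4 := by
    have h : (Real.sqrt Real.pi * u) ^ 4 = (Real.sqrt Real.pi ^ 2) ^ 2 * u ^ 4 := by ring
    rw [h, hp2]
    have hpisq : (9:ℝ) ≤ Real.pi ^ 2 := by nlinarith [Real.pi_gt_three]
    nlinarith [pow_pos hu 4, hpisq]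
  have hF := spiral_F_neg htpos hu hkey hcpos hc1 hspos h9
  have hune : u ≠ 0 := hu.ne'
  have hEq : (2 * Real.sin (Real.sqrt Real.pi * u) * (Real.cos (Real.sqrt Real.pi * u) * Real.sqrt Real.pi) * u ^ 2
          - Real.sin (Real.sqrt Real.pi * u) ^ 2 * (2 * u)) / (u ^ 2) ^ 2
        + (2 * u * Real.cos (Real.sqrt Real.pi * u) ^ 2
          + u ^ 2 * (2 * Real.cos (Real.sqrt Real.pi * u) * (-Real.sin (Real.sqrt Real.pi * u) * Real.sqrt Real.pi)))
      = (2 / u ^ 3) * (Real.sin (Real.sqrt Real.pi * u) * Real.cos (Real.sqrt Real.pi * u) * (Real.sqrt Real.pi * u)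
          - Real.sin (Real.sqrt Real.pi * u) ^ 2 + u ^ 4 * Real.cos (Real.sqrt Real.pi * u) ^ 2
          - (Real.sqrt Real.pi * u) * u ^ 4 * Real.cos (Real.sqrt Real.pi * u) * Real.sin (Real.sqrt Real.pi * u)) := by
    field_simp
    ring
  rw [hEq]
  exact mul_neg_of_pos_of_neg (by positivity) hF

lemma spiral_anti : StrictAntiOn spiralPhi (Set.Ioc 0 (Real.sqrt 2 - 1)) := by
  apply strictAntiOn_of_deriv_neg (convex_Ioc _ _)
  · intro u hu
    exact (spiral_hasDerivAt (ne_of_gt hu.1)).continuousAt.continuousWithinAt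
  · rw [interior_Ioc]
    intro u hu
    exact spiral_deriv_neg hu.1 hu.2.le

lemma spiral_phi_lt_pi {u : ℝ} (hu : 0 < u) (hu' : u ≤ Real.sqrt 2 - 1) :
    spiralPhi u < Real.pi := by
  obtain ⟨htpos, ht34⟩ := spiral_t_bounds hu hu'
  have hp2 : Real.sqrt Real.pi ^ 2 = Real.pi := Real.sq_sqrt Real.pi_pos.le
  have hcpos : 0 < Real.cos (Real.sqrt Real.pi * u) := Real.cos_pos_of_mem_Ioo
    ⟨by nlinarith [Real.pi_gt_three], by nlinarith [Real.pi_gt_three]⟩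
  have hc1 : Real.cos (Real.sqrt Real.pi * u) ≤ 1 := Real.cos_le_one _
  -- lower bound on cos via half angle
  have h2 : Real.sqrt Real.pi * u / 2 - (Real.sqrt Real.pi * u / 2) ^ 3 / 4
      < Real.sin (Real.sqrt Real.pi * u / 2) :=
    by have := Real.sin_gt_sub_cube (x := Real.sqrt Real.pi * u / 2) (by linarith); nlinarith [pow_pos (by linarith : (0:ℝ) < Real.sqrt Real.pi * u / 2) 3]
  have hsin2lt : Real.sin (Real.sqrt Real.pi * u / 2) < Real.sqrt Real.pi * u / 2 :=
    Real.sin_lt (by linarith)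
  have hysq : (Real.sqrt Real.pi * u / 2) ^ 2 ≤ 1 := by nlinarith
  have hy3 : (Real.sqrt Real.pi * u / 2) ^ 3 ≤ Real.sqrt Real.pi * u / 2 := by
    nlinarith [hysq, (show (0:ℝ) < Real.sqrt Real.pi * u / 2 by linarith)]
  have hsin2pos : 0 < Real.sin (Real.sqrt Real.pi * u / 2) := by linarith
  have hcos : Real.cos (Real.sqrt Real.pi * u)
      = 1 - 2 * Real.sin (Real.sqrt Real.pi * u / 2) ^ 2 := by
    have h := Real.cos_two_mul (Real.sqrt Real.pi * u / 2)
    have h' := Real.sin_sq_add_cos_sq (Real.sqrt Real.pi * u / 2)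
    have ht2 : (2 : ℝ) * (Real.sqrt Real.pi * u / 2) = Real.sqrt Real.pi * u := by ring
    rw [ht2] at h
    linarith
  have hc_lb : 1 - (Real.sqrt Real.pi * u) ^ 2 / 2 ≤ Real.cos (Real.sqrt Real.pi * u) := by
    nlinarith [hsin2lt, hsin2pos]
  have hpy : Real.sin (Real.sqrt Real.pi * u) ^ 2 = 1 - Real.cos (Real.sqrt Real.pi * u) ^ 2 := by
    have := Real.sin_sq_add_cos_sq (Real.sqrt Real.pi * u)
    linarith
  have h9 : 9 * u ^ 4 ≤ (Real.sqrt Real.pi * u) ^ 4 := by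
    have h : (Real.sqrt Real.pi * u) ^ 4 = (Real.sqrt Real.pi ^ 2) ^ 2 * u ^ 4 := by ring
    rw [h, hp2]
    have hpisq : (9:ℝ) ≤ Real.pi ^ 2 := by nlinarith [Real.pi_gt_three]
    nlinarith [pow_pos hu 4, hpisq]
  have hmain := spiral_main_ineq htpos ht34 hu hpy hc_lb hc1 hcpos h9
  have hrw : spiralPhi u = (Real.sin (Real.sqrt Real.pi * u) ^ 2
      + u ^ 4 * Real.cos (Real.sqrt Real.pi * u) ^ 2) / u ^ 2 := by
    rw [spiralPhi]
    field_simp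
  rw [hrw, div_lt_iff₀ (by positivity)]
  have hpi : Real.pi * u ^ 2 = (Real.sqrt Real.pi * u) ^ 2 := by
    rw [mul_pow, hp2]
  rw [hpi]
  exact hmain

lemma spiral_identity {x : ℝ} (hx : 1 ≤ x) :
    2 * x + 1 - 2 * Real.sqrt (x * (x + 1)) *
        Real.cos (2 * Real.sqrt Real.pi * (Real.sqrt (x + 1) - Real.sqrt x))
      = spiralPhi (Real.sqrt (x + 1) - Real.sqrt x) := by
  have hx0 : (0 : ℝ) ≤ x := by linarith
  set a := Real.sqrt x with ha
  set b := Real.sqrt (x + 1) with hb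
  have ha2 : a ^ 2 = x := Real.sq_sqrt hx0
  have hb2 : b ^ 2 = x + 1 := Real.sq_sqrt (by linarith)
  have hab : Real.sqrt (x * (x + 1)) = a * b := Real.sqrt_mul hx0 _
  have hupos : 0 < b - a := by
    have : a < b := Real.sqrt_lt_sqrt hx0 (by linarith)
    linarith
  set p := Real.sqrt Real.pi with hp
  set u := b - a with hu
  have hcos2 : Real.cos (2 * p * u) = 2 * Real.cos (p * u) ^ 2 - 1 := by
    have h := Real.cos_two_mul (p * u)
    have : 2 * p * u = 2 * (p * u) := by ring
    rw [this, h]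
  have hpy : Real.sin (p * u) ^ 2 = 1 - Real.cos (p * u) ^ 2 := by
    have := Real.sin_sq_add_cos_sq (p * u)
    linarith
  set c := Real.cos (p * u) with hc
  rw [hab, hcos2, spiralPhi, ← hp, ← hc, hpy]
  rw [div_add' _ _ _ (by positivity : u ^ 2 ≠ 0), eq_div_iff (by positivity : u ^ 2 ≠ 0)]
  have hba : b ^ 2 - a ^ 2 = 1 := by rw [ha2, hb2]; ring
  have hx' : x = a ^ 2 := ha2.symm
  rw [hx', hu]
  linear_combination ((1 - c ^ 2) * (b ^ 2 - a ^ 2 + 1) - (b - a) ^ 2) * hba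

lemma spiral_u_inv {x : ℝ} (hx : 0 ≤ x) :
    Real.sqrt (x + 1) - Real.sqrt x = 1 / (Real.sqrt (x + 1) + Real.sqrt x) := by
  have ha2 : Real.sqrt x ^ 2 = x := Real.sq_sqrt hx
  have hb2 : Real.sqrt (x + 1) ^ 2 = x + 1 := Real.sq_sqrt (by linarith)
  have hbpos : 0 < Real.sqrt (x + 1) := Real.sqrt_pos.mpr (by linarith)
  have hpos : 0 < Real.sqrt (x + 1) + Real.sqrt x := by
    have := Real.sqrt_nonneg x
    linarith
  rw [eq_div_iff hpos.ne']
  linear_combination hb2 - ha2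

lemma spiral_u_mem {x : ℝ} (hx : 1 ≤ x) :
    Real.sqrt (x + 1) - Real.sqrt x ∈ Set.Ioc 0 (Real.sqrt 2 - 1) := by
  have hx0 : (0 : ℝ) ≤ x := by linarith
  constructor
  · have : Real.sqrt x < Real.sqrt (x + 1) := Real.sqrt_lt_sqrt hx0 (by linarith)
    linarith
  · have h1 : (1 : ℝ) ≤ Real.sqrt x := by
      rw [show (1:ℝ) = Real.sqrt 1 from (Real.sqrt_one).symm]
      exact Real.sqrt_le_sqrt hx
    have h2 : Real.sqrt 2 ≤ Real.sqrt (x + 1) := Real.sqrt_le_sqrt (by linarith)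
    have hs2 : Real.sqrt 2 ^ 2 = 2 := Real.sq_sqrt (by norm_num)
    have hs2pos : 0 < Real.sqrt 2 := Real.sqrt_pos.mpr (by norm_num)
    have hid : (Real.sqrt 2 - 1) * (Real.sqrt 2 + 1) = 1 := by nlinarith
    rw [spiral_u_inv hx0]
    have hden : Real.sqrt 2 + 1 ≤ Real.sqrt (x + 1) + Real.sqrt x := by linarith
    have hdenpos : 0 < Real.sqrt 2 + 1 := by linarith
    calc 1 / (Real.sqrt (x + 1) + Real.sqrt x) ≤ 1 / (Real.sqrt 2 + 1) := by
          apply one_div_le_one_div_of_le hdenpos hden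
      _ = Real.sqrt 2 - 1 := by
          rw [eq_comm, eq_div_iff hdenpos.ne']
          linarith [hid]

lemma spiral_u_anti {x y : ℝ} (hx : 1 ≤ x) (hxy : x < y) :
    Real.sqrt (y + 1) - Real.sqrt y < Real.sqrt (x + 1) - Real.sqrt x := by
  have hx0 : (0 : ℝ) ≤ x := by linarith
  have hy0 : (0 : ℝ) ≤ y := by linarith
  rw [spiral_u_inv hx0, spiral_u_inv hy0]
  have h1 : Real.sqrt x < Real.sqrt y := Real.sqrt_lt_sqrt hx0 hxy
  have h2 : Real.sqrt (x + 1) < Real.sqrt (y + 1) := Real.sqrt_lt_sqrt (by linarith) (by linarith)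
  have hpos : 0 < Real.sqrt (x + 1) + Real.sqrt x := by
    have := Real.sqrt_nonneg x
    have := Real.sqrt_pos.mpr (show (0:ℝ) < x + 1 by linarith)
    linarith
  apply one_div_lt_one_div_of_lt hpos
  linarith

/-- `g` is monotonically increasing on `[1,∞)` and consequently
`g(x) < π/(m/2+1)` for all `x ≥ 1`. -/
theorem spiral_gap_monotone (m : ℕ) (hm : 0 < m) (hme : Even m) (g : ℝ → ℝ)
    (hg : ∀ x, g x = (1 / ((m : ℝ) / 2 + 1)) *
      (2 * x + 1 - 2 * Real.sqrt (x * (x + 1)) *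
        Real.cos (2 * Real.sqrt Real.pi * (Real.sqrt (x + 1) - Real.sqrt x)))) :
    StrictMonoOn g (Set.Ici 1) ∧
      ∀ x : ℝ, 1 ≤ x → g x < Real.pi / ((m : ℝ) / 2 + 1) := by
  have hcpos : 0 < 1 / ((m : ℝ) / 2 + 1) := by positivity
  have hgφ : ∀ x : ℝ, 1 ≤ x → g x = (1 / ((m : ℝ) / 2 + 1)) *
      spiralPhi (Real.sqrt (x + 1) - Real.sqrt x) := by
    intro x hx
    rw [hg, spiral_identity hx]
  constructor
  · intro x hx y hy hxy
    rw [hgφ x hx, hgφ y hy]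
    have hux := spiral_u_mem hx
    have huy := spiral_u_mem hy
    have hlt := spiral_anti huy hux (spiral_u_anti hx hxy)
    exact mul_lt_mul_of_pos_left hlt hcpos
  · intro x hx
    rw [hgφ x hx]
    have hux := spiral_u_mem hx
    have hlt := spiral_phi_lt_pi hux.1 hux.2
    calc (1 / ((m : ℝ) / 2 + 1)) * spiralPhi (Real.sqrt (x + 1) - Real.sqrt x)
        < (1 / ((m : ℝ) / 2 + 1)) * Real.pi := mul_lt_mul_of_pos_left hlt hcpos
      _ = Real.pi / ((m : ℝ) / 2 + 1) := by ring
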